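/- Let H : S → BG be a functor from a finite groupoid S, and let (id_S, e)_* be the identity G-span from (S,H) to (S,H): apex S, both legs the identity functor, and ε the constant function with value the identity element e of G. Then its matrix [(id_S,e)_*] : π₀(S) × π₀(S) → ℚG is diagonal with [(id_S,e)_*](c,d) = 0 for non-isomorphic c, d, its diagonal entries are [(id_S,e)_*](c,c) = overline{H(Aut_S(c))} := |H(Aut_S(c))|⁻¹ · Σ_{g ∈ H(Aut_S(c))} g, and the matrix is idempotent: [(id_S,e)_*]·[(id_S,e)_*] = [(id_S,e)_*]. -/

import Mathlib

open CategoryTheory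

noncomputable section

/-- The component set `π₀(C)`: isomorphism classes of objects of `C`. -/
abbrev Pi0 (C : Type*) [Category C] := Quotient (isIsomorphicSetoid C)

/-- Groupoid cardinality (Euler characteristic): the sum, over a set of representatives of
the isomorphism classes of objects, of the reciprocals of the orders of the automorphism
groups. -/
noncomputable def gcard (C : Type*) [Category C] : ℚ :=
  ∑ᶠ x : Pi0 C, (Nat.card (Aut (Quotient.out x)) : ℚ)⁻¹

/-- A functor into the one-object groupoid `BG`, identified with an assignment of elements
of `G` to morphisms (composition goes to multiplication in reverse order, matching the
convention `f ≫ g ↦ g·f` of `BG`). -/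
structure GFunctor (S : Type*) [Category S] (G : Type*) [Group G] where
  map : ∀ {a b : S}, (a ⟶ b) → G
  map_id : ∀ a : S, map (𝟙 a) = 1
  map_comp : ∀ {a b c : S} (f : a ⟶ b) (g : b ⟶ c), map (f ≫ g) = map g * map f

/-- The two-sided homotopy fibre `c\M/d` of a span `S ⟵L M ⟶R T`: objects are triples
`(s, a, t)` with `s : c ⟶ L a` and `t : R a ⟶ d`; morphisms are morphisms `m : a₁ ⟶ a₂`
of `M` with `L m ∘ s₁ = s₂` and `t₂ ∘ R m = t₁`. -/
abbrev TwoFibre {S T M : Type*} [Category S] [Category T] [Category M]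
    (L : M ⥤ S) (R : M ⥤ T) (c : S) (d : T) :=
  StructuredArrow c (CostructuredArrow.proj R d ⋙ L)

/-- The induced function `c\ε/d` on the two-sided homotopy fibre:
`(s,a,t) ↦ V(t)·ε(a)·H(s)`. -/
def twoEps {S T M : Type*} [Category S] [Category T] [Category M]
    {G : Type*} [Group G] (H : GFunctor S G) (V : GFunctor T G)
    (L : M ⥤ S) (R : M ⥤ T) (ε : M → G) {c : S} {d : T}
    (x : TwoFibre L R c d) : G :=
  V.map x.right.hom * ε x.right.left * H.map x.hom

/-- The matrix `[M, ε] : π₀(S) × π₀(T) → ℚG` of a `G`-span: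
`[M,ε](c,d) = |Aut_T(d)|⁻¹ · ∑_{g ∈ G} χ((c\M/d){c\ε/d = g}) · g`. -/
noncomputable def spanMatrix {S T M : Type*} [Category S] [Category T] [Category M]
    {G : Type*} [CommGroup G] [Fintype G]
    (H : GFunctor S G) (V : GFunctor T G)
    (L : M ⥤ S) (R : M ⥤ T) (ε : M → G)
    (c : Pi0 S) (d : Pi0 T) : MonoidAlgebra ℚ G :=
  ∑ g : G, MonoidAlgebra.single g
    ((Nat.card (Aut (Quotient.out d)) : ℚ)⁻¹ *
      gcard (ObjectProperty.FullSubcategory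
        (fun x : TwoFibre L R (Quotient.out c) (Quotient.out d) =>
          twoEps H V L R ε x = g)))

/-! ### Auxiliary material -/

open scoped Classical

section Aux

/-- Finiteness of comma categories. -/
instance finiteComma {A B T : Type*} [Category A] [Category B] [Category T]
    (L : A ⥤ T) (R : B ⥤ T) [Finite A] [Finite B] [∀ a b : T, Finite (a ⟶ b)] :
    Finite (Comma L R) := by
  apply Finite.of_injective
    (fun x : Comma L R => (⟨(x.left, x.right), x.hom⟩ : Σ p : A × B, (L.obj p.1 ⟶ R.obj p.2)))
  intro x y h
  cases x; cases y
  injection h with h1 h2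
  injection h1 with h1a h1b
  subst h1a; subst h1b
  simpa using h2

instance finiteStructuredArrow {A T : Type*} [Category A] [Category T]
    [Finite A] [∀ a b : T, Finite (a ⟶ b)] (c : T) (F : A ⥤ T) :
    Finite (StructuredArrow c F) :=
  inferInstanceAs (Finite (Comma _ _))

instance finiteCostructuredArrow {A T : Type*} [Category A] [Category T]
    [Finite A] [∀ a b : T, Finite (a ⟶ b)] (c : T) (F : A ⥤ T) :
    Finite (CostructuredArrow F c) :=
  inferInstanceAs (Finite (Comma _ _))

instance finiteFullSub {Z : Type*} [Category Z] [Finite Z] (P : Z → Prop) :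
    Finite (ObjectProperty.FullSubcategory P) :=
  Finite.of_injective ObjectProperty.FullSubcategory.obj (fun x y h => by cases x; cases y; simpa using h)

/-- The groupoid cardinality of a finite category with subsingleton hom-sets is the number
of connected components. -/
theorem gcard_eq_card (C : Type*) [Category C] [Finite C]
    (hs : ∀ x y : C, Subsingleton (x ⟶ y)) : gcard C = Nat.card (Pi0 C) := by
  have : Finite (Pi0 C) := Quotient.finite _
  have hc : ∀ x : Pi0 C, (Nat.card (Aut (Quotient.out x)) : ℚ)⁻¹ = 1 := by
    intro x
    have : Subsingleton (Aut (Quotient.out x)) := by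
      constructor; intro f g; apply Iso.ext; exact (hs _ _).elim _ _
    rw [show Nat.card (Aut (Quotient.out x)) = 1 from Nat.card_of_subsingleton 1]; norm_num
  have : Fintype (Pi0 C) := Fintype.ofFinite _
  rw [gcard]
  simp only [hc]
  rw [finsum_eq_sum_of_fintype]
  simp [Nat.card_eq_fintype_card]

theorem gcard_of_isEmpty (C : Type*) [Category C] (h : IsEmpty C) : gcard C = 0 := by
  have : IsEmpty (Pi0 C) := ⟨fun x => h.elim x.out⟩
  rw [gcard, finsum_of_isEmpty]

end Aux

section Fibre

variable {S : Type*} [Groupoid S] {G : Type*} [CommGroup G] (H : GFunctor S G) (c₀ d₀ : S)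

instance twoFibreHomSub (x y : TwoFibre (𝟭 S) (𝟭 S) c₀ d₀) : Subsingleton (x ⟶ y) := by
  constructor
  intro f g
  apply StructuredArrow.hom_ext
  apply CostructuredArrow.hom_ext
  have hf := StructuredArrow.w f
  have hg := StructuredArrow.w g
  simp only [Functor.comp_map, CostructuredArrow.proj_map, Functor.id_map] at hf hg
  exact (cancel_epi x.hom).mp (hf.trans hg.symm)

instance fullSubHomSub {Z : Type*} [Category Z] (P : Z → Prop) (X Y : ObjectProperty.FullSubcategory P)
    [h : Subsingleton (X.obj ⟶ Y.obj)] : Subsingleton (X ⟶ Y) :=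
  ⟨fun a b => InducedCategory.Hom.ext (Subsingleton.elim _ _)⟩

/-- A morphism in the two-sided fibre of the identity span, given equal composites. -/
def mkHom (x y : TwoFibre (𝟭 S) (𝟭 S) c₀ d₀)
    (h : x.hom ≫ x.right.hom = y.hom ≫ y.right.hom) : x ⟶ y :=
  StructuredArrow.homMk
    (CostructuredArrow.homMk (Groupoid.inv x.hom ≫ y.hom)
      (by
        show (𝟭 S).map _ ≫ y.right.hom = x.right.hom
        have e : ∀ (a b : S) (p : c₀ ⟶ a) (q : a ⟶ d₀) (r : c₀ ⟶ b) (t : b ⟶ d₀),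
            p ≫ q = r ≫ t → (Groupoid.inv p ≫ r) ≫ t = q := by
          intro a b p q r t h
          rw [Category.assoc, ← h, Groupoid.inv_eq_inv, IsIso.inv_hom_id_assoc]
        exact e _ _ x.hom x.right.hom y.hom y.right.hom h))
    (by
      show x.hom ≫ _ = y.hom
      have e : ∀ (a b : S) (p : c₀ ⟶ a) (r : c₀ ⟶ b), p ≫ (Groupoid.inv p ≫ r) = r := by
        intro a b p r
        rw [Groupoid.inv_eq_inv, IsIso.hom_inv_id_assoc]
      exact e _ _ x.hom y.hom)

def mkObj (a : S) (s : c₀ ⟶ a) (t : a ⟶ d₀) : TwoFibre (𝟭 S) (𝟭 S) c₀ d₀ :=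
  StructuredArrow.mk (Y := CostructuredArrow.mk (S := 𝟭 S) t) s

@[simp] lemma mkObj_comp (a : S) (s : c₀ ⟶ a) (t : a ⟶ d₀) :
    (mkObj c₀ d₀ a s t).hom ≫ (mkObj c₀ d₀ a s t).right.hom = s ≫ t := rfl

lemma comp_eq_of_hom {x y : TwoFibre (𝟭 S) (𝟭 S) c₀ d₀} (u : x ⟶ y) :
    x.hom ≫ x.right.hom = y.hom ≫ y.right.hom := by
  have h1 := StructuredArrow.w u
  have h2 := CostructuredArrow.w u.right
  simp only [Functor.comp_map, CostructuredArrow.proj_map, Functor.id_map] at h1 h2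
  rw [← h2, ← h1]
  exact (Category.assoc _ _ _).symm

lemma twoEps_eq (x : TwoFibre (𝟭 S) (𝟭 S) c₀ d₀) :
    twoEps H H (𝟭 S) (𝟭 S) (fun _ => (1 : G)) x = H.map (x.hom ≫ x.right.hom) := by
  rw [twoEps, mul_one]
  exact (H.map_comp _ _).symm

variable (g : G)

abbrev Fib := ObjectProperty.FullSubcategory
  (fun x : TwoFibre (𝟭 S) (𝟭 S) c₀ d₀ => twoEps H H (𝟭 S) (𝟭 S) (fun _ => (1:G)) x = g)

/-- Objects of the fibre with equal composites are isomorphic. -/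
def fibIso (X Y : Fib H c₀ d₀ g)
    (h : X.obj.hom ≫ X.obj.right.hom = Y.obj.hom ≫ Y.obj.right.hom) : X ≅ Y where
  hom := ⟨mkHom c₀ d₀ X.obj Y.obj h⟩
  inv := ⟨mkHom c₀ d₀ Y.obj X.obj h.symm⟩
  hom_inv_id := Subsingleton.elim _ _
  inv_hom_id := Subsingleton.elim _ _

/-- The bijection from π₀ of the fibre to the set of arrows with prescribed H-value. -/
noncomputable def pi0FibEquiv : Pi0 (Fib H c₀ d₀ g) ≃ {f : c₀ ⟶ d₀ // H.map f = g} where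
  toFun := Quotient.lift
    (fun X : Fib H c₀ d₀ g => (⟨X.obj.hom ≫ X.obj.right.hom, by
      rw [← twoEps_eq]; exact X.property⟩ : {f : c₀ ⟶ d₀ // H.map f = g}))
    (by
      rintro X Y ⟨u⟩
      exact Subtype.ext (comp_eq_of_hom c₀ d₀ (x := X.obj) (y := Y.obj) u.hom.hom))
  invFun := fun f => ⟦⟨mkObj c₀ d₀ c₀ (𝟙 c₀) f.1, by
    rw [twoEps_eq, mkObj_comp, Category.id_comp]; exact f.2⟩⟧
  left_inv := by
    refine Quotient.ind (fun X => ?_)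
    apply Quotient.sound
    exact ⟨(fibIso H c₀ d₀ g _ X (by simp)).symm.symm⟩
  right_inv := fun f => Subtype.ext (by simp)

end Fibre

section Counting

variable {S : Type*} [Groupoid S] [∀ a b : S, Finite (a ⟶ b)]
  {G : Type*} [CommGroup G] (H : GFunctor S G) (x₀ : S)

def phi : Aut x₀ →* G where
  toFun := fun f => H.map f.hom
  map_one' := H.map_id x₀
  map_mul' := by
    intro f g
    show H.map (g.hom ≫ f.hom) = _
    rw [H.map_comp, mul_comm]

instance : Finite (Aut x₀) :=
  Finite.of_injective (fun f : Aut x₀ => f.hom) (fun f g h => Iso.ext h)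

lemma card_fiber (g : G) :
    Nat.card {f : x₀ ⟶ x₀ // H.map f = g} =
      if g ∈ Set.range (fun f : Aut x₀ => H.map f.hom) then Nat.card (phi H x₀).ker else 0 := by
  have e1 : {f : x₀ ⟶ x₀ // H.map f = g} ≃ {u : Aut x₀ // phi H x₀ u = g} :=
    (Equiv.subtypeEquiv (Groupoid.isoEquivHom x₀ x₀).symm (fun f => by
      show H.map f = g ↔ H.map ((Groupoid.isoEquivHom x₀ x₀).symm f).hom = g
      rw [show ((Groupoid.isoEquivHom x₀ x₀).symm f).hom =
        (Groupoid.isoEquivHom x₀ x₀) ((Groupoid.isoEquivHom x₀ x₀).symm f) from rfl,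
        Equiv.apply_symm_apply]))
  rw [Nat.card_congr e1]
  by_cases hg : g ∈ Set.range (fun f : Aut x₀ => H.map f.hom)
  · rw [if_pos hg]
    obtain ⟨u₀, hu₀⟩ := hg
    have hu₀' : phi H x₀ u₀ = g := hu₀
    have e2 : (phi H x₀).ker ≃ {u : Aut x₀ // phi H x₀ u = g} :=
      { toFun := fun k => ⟨u₀ * k.1, by
          rw [map_mul, show phi H x₀ k.1 = 1 from k.2, mul_one, hu₀']⟩
        invFun := fun u => ⟨u₀⁻¹ * u.1, MonoidHom.mem_ker.mpr (by
          rw [map_mul, map_inv, u.2, hu₀', inv_mul_cancel])⟩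
        left_inv := fun k => by simp
        right_inv := fun u => by simp }
    rw [Nat.card_congr e2]
  · rw [if_neg hg]
    have : IsEmpty {u : Aut x₀ // phi H x₀ u = g} := by
      constructor; rintro ⟨u, hu⟩; exact hg ⟨u, hu⟩
    simp [Nat.card_of_isEmpty]

lemma card_aut_eq : Nat.card (Aut x₀) =
    Nat.card (Set.range (fun f : Aut x₀ => H.map f.hom)) * Nat.card (phi H x₀).ker := by
  have h1 := Subgroup.card_eq_card_quotient_mul_card_subgroup (phi H x₀).ker
  have h2 : Nat.card (Aut x₀ ⧸ (phi H x₀).ker) = Nat.card (phi H x₀).range :=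
    Nat.card_congr (QuotientGroup.quotientKerEquivRange (phi H x₀)).toEquiv
  have h3 : (Set.range (fun f : Aut x₀ => H.map f.hom)) = ((phi H x₀).range : Set G) := rfl
  rw [h1, h2, h3]
  rfl

end Counting

section Bar

variable {G : Type*} [CommGroup G] [Fintype G]

lemma key_sum (U : Subgroup G) (u : G) (hu : u ∈ U) :
    ∑ v ∈ (U : Set G).toFinset, MonoidAlgebra.single (u * v) (1:ℚ) =
    ∑ w ∈ (U : Set G).toFinset, MonoidAlgebra.single w (1:ℚ) := by
  apply Finset.sum_nbij' (i := fun v => u * v) (j := fun w => u⁻¹ * w)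
  · intro a ha; simp only [Set.mem_toFinset] at *; exact U.mul_mem hu ha
  · intro a ha; simp only [Set.mem_toFinset] at *; exact U.mul_mem (U.inv_mem hu) ha
  · intro a _; simp
  · intro a _; simp
  · intro a _; rfl

lemma bar_idem (U : Subgroup G) :
    ((Nat.card U : ℚ)⁻¹ • ∑ u ∈ (U : Set G).toFinset, MonoidAlgebra.single u (1:ℚ)) *
    ((Nat.card U : ℚ)⁻¹ • ∑ u ∈ (U : Set G).toFinset, MonoidAlgebra.single u (1:ℚ)) =
    (Nat.card U : ℚ)⁻¹ • ∑ u ∈ (U : Set G).toFinset, MonoidAlgebra.single u (1:ℚ) := by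
  have hcard : (Nat.card U : ℚ) = ((U : Set G).toFinset.card : ℚ) := by
    have : Nat.card U = Nat.card ((U : Set G)) := rfl
    rw [this, Nat.card_eq_card_toFinset]
  have hne : ((U : Set G).toFinset.card : ℚ) ≠ 0 := by
    simp only [ne_eq, Nat.cast_eq_zero, Finset.card_eq_zero]
    intro h
    have h1 : (1 : G) ∈ (U : Set G).toFinset := by
      simp only [Set.mem_toFinset]; exact U.one_mem
    rw [h] at h1; exact absurd h1 (Finset.notMem_empty _)
  have key : (∑ u ∈ (U : Set G).toFinset, MonoidAlgebra.single u (1:ℚ)) *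
      (∑ u ∈ (U : Set G).toFinset, MonoidAlgebra.single u (1:ℚ)) =
      ((U : Set G).toFinset.card : ℚ) • ∑ u ∈ (U : Set G).toFinset, MonoidAlgebra.single u (1:ℚ) := by
    rw [Finset.sum_mul_sum]
    have : ∀ u ∈ (U : Set G).toFinset,
        ∑ v ∈ (U : Set G).toFinset, MonoidAlgebra.single u (1:ℚ) * MonoidAlgebra.single v 1 =
        ∑ w ∈ (U : Set G).toFinset, MonoidAlgebra.single w (1:ℚ) := by
      intro u hu
      simp only [MonoidAlgebra.single_mul_single, one_mul]
      exact key_sum U u (by simpa using hu)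
    rw [Finset.sum_congr rfl this, Finset.sum_const, ← Nat.cast_smul_eq_nsmul ℚ]
  rw [smul_mul_smul_comm, key, smul_smul]
  congr 1
  rw [hcard]
  field_simp

end Bar

section Main

variable {S : Type*} [Groupoid S] [Finite S] [∀ a b : S, Finite (a ⟶ b)]
  {G : Type*} [CommGroup G] [Fintype G] (H : GFunctor S G)

lemma gcard_fib (c₀ d₀ : S) (g : G) :
    gcard (Fib H c₀ d₀ g) = Nat.card {f : c₀ ⟶ d₀ // H.map f = g} := by
  rw [gcard_eq_card _ (fun x y => inferInstance), Nat.card_congr (pi0FibEquiv H c₀ d₀ g)]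

lemma spanMatrix_offdiag (c d : Pi0 S) (h : c ≠ d) :
    spanMatrix H H (𝟭 S) (𝟭 S) (fun _ => (1 : G)) c d = 0 := by
  have hempty : ∀ g : G, IsEmpty (Fib H (Quotient.out c) (Quotient.out d) g) := by
    intro g
    constructor
    intro X
    apply h
    rw [← Quotient.out_eq c, ← Quotient.out_eq d]
    exact Quotient.sound ⟨(Groupoid.isoEquivHom _ _).symm (X.obj.hom ≫ X.obj.right.hom)⟩
  rw [spanMatrix]
  apply Finset.sum_eq_zero
  intro g _
  rw [gcard_of_isEmpty _ (hempty g), mul_zero, MonoidAlgebra.single_zero]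

lemma spanMatrix_diag (c : Pi0 S) :
    spanMatrix H H (𝟭 S) (𝟭 S) (fun _ => (1 : G)) c c =
      (Nat.card ((phi H (Quotient.out c)).range) : ℚ)⁻¹ •
        ∑ u ∈ (((phi H (Quotient.out c)).range : Subgroup G) : Set G).toFinset,
          MonoidAlgebra.single u (1:ℚ) := by
  set x₀ := Quotient.out c with hx₀
  have hker : (Nat.card (phi H x₀).ker : ℚ) ≠ 0 := by
    have : 0 < Nat.card (phi H x₀).ker := Nat.card_pos
    exact_mod_cast this.ne'
  have hrange : (Nat.card (phi H x₀).range : ℚ) ≠ 0 := by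
    have : 0 < Nat.card (phi H x₀).range := Nat.card_pos
    exact_mod_cast this.ne'
  have hrangeset : (Set.range (fun f : Aut x₀ => H.map f.hom)) = ((phi H x₀).range : Set G) := rfl
  rw [spanMatrix]
  have hterm : ∀ g : G, MonoidAlgebra.single g
      ((Nat.card (Aut x₀) : ℚ)⁻¹ * gcard (Fib H x₀ x₀ g)) =
      if g ∈ ((phi H x₀).range : Set G).toFinset then
        MonoidAlgebra.single g ((Nat.card ((phi H x₀).range) : ℚ)⁻¹) else 0 := by
    intro g
    rw [gcard_fib, card_fiber]
    by_cases hg : g ∈ Set.range (fun f : Aut x₀ => H.map f.hom)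
    · rw [if_pos hg, if_pos (by rw [Set.mem_toFinset]; exact hg)]
      congr 1
      have hcards : Nat.card (Set.range fun f : Aut x₀ => H.map f.hom) =
          Nat.card (phi H x₀).range := Nat.card_congr (Equiv.setCongr hrangeset)
      rw [card_aut_eq H x₀, hcards, Nat.cast_mul, mul_inv, mul_assoc,
        inv_mul_cancel₀ hker, mul_one]
    · rw [if_neg hg, if_neg (by rw [Set.mem_toFinset]; exact hg)]
      simp
  calc ∑ g : G, MonoidAlgebra.single g
        ((Nat.card (Aut x₀) : ℚ)⁻¹ * gcard (Fib H x₀ x₀ g))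
      = ∑ g : G, if g ∈ ((phi H x₀).range : Set G).toFinset then
          MonoidAlgebra.single g ((Nat.card ((phi H x₀).range) : ℚ)⁻¹) else 0 := by
        exact Finset.sum_congr rfl (fun g _ => hterm g)
    _ = ∑ g ∈ ((phi H x₀).range : Set G).toFinset,
          MonoidAlgebra.single g ((Nat.card ((phi H x₀).range) : ℚ)⁻¹) := by
        rw [Finset.sum_ite_mem, Finset.univ_inter]
    _ = (Nat.card ((phi H x₀).range) : ℚ)⁻¹ •
          ∑ u ∈ (((phi H x₀).range : Subgroup G) : Set G).toFinset,
            MonoidAlgebra.single u (1:ℚ) := by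
        rw [Finset.smul_sum]
        exact Finset.sum_congr rfl (fun g _ => by
          rw [MonoidAlgebra.smul_single', mul_one])

theorem stmt7' :
    (∀ c d : Pi0 S, c ≠ d →
        spanMatrix H H (𝟭 S) (𝟭 S) (fun _ => (1 : G)) c d = 0) ∧
      (∀ c : Pi0 S,
        spanMatrix H H (𝟭 S) (𝟭 S) (fun _ => (1 : G)) c c =
          (Nat.card (Set.range fun f : Aut (Quotient.out c) => H.map f.hom) : ℚ)⁻¹ •
            ∑ᶠ u : Set.range (fun f : Aut (Quotient.out c) => H.map f.hom),
              MonoidAlgebra.of ℚ G (u : G)) ∧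
      ∀ c₁ c₂ : Pi0 S,
        ∑ᶠ d : Pi0 S,
            spanMatrix H H (𝟭 S) (𝟭 S) (fun _ => (1 : G)) d c₂ *
              spanMatrix H H (𝟭 S) (𝟭 S) (fun _ => (1 : G)) c₁ d =
          spanMatrix H H (𝟭 S) (𝟭 S) (fun _ => (1 : G)) c₁ c₂ := by
  have hdiag2 : ∀ c : Pi0 S,
      spanMatrix H H (𝟭 S) (𝟭 S) (fun _ => (1 : G)) c c =
        (Nat.card (Set.range fun f : Aut (Quotient.out c) => H.map f.hom) : ℚ)⁻¹ •
          ∑ᶠ u : Set.range (fun f : Aut (Quotient.out c) => H.map f.hom),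
            MonoidAlgebra.of ℚ G (u : G) := by
    intro c
    rw [spanMatrix_diag H c]
    have hset : (Set.range fun f : Aut (Quotient.out c) => H.map f.hom) =
        ((phi H (Quotient.out c)).range : Set G) := rfl
    have hcards : Nat.card (Set.range fun f : Aut (Quotient.out c) => H.map f.hom) =
        Nat.card (phi H (Quotient.out c)).range := Nat.card_congr (Equiv.setCongr hset)
    have hsum : (∑ᶠ u : (Set.range fun f : Aut (Quotient.out c) => H.map f.hom),
        MonoidAlgebra.of ℚ G (u : G)) =
        ∑ u ∈ (((phi H (Quotient.out c)).range : Subgroup G) : Set G).toFinset,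
          MonoidAlgebra.single u (1:ℚ) := by
      rw [finsum_eq_sum_of_fintype, Finset.sum_set_coe, Set.toFinset_congr hset]
      exact Finset.sum_congr rfl (fun g _ => by simp [MonoidAlgebra.of_apply])
    rw [hsum, hcards]
  refine ⟨spanMatrix_offdiag H, hdiag2, ?_⟩
  intro c₁ c₂
  have : Finite (Pi0 S) := Quotient.finite _
  by_cases h : c₁ = c₂
  · subst h
    rw [finsum_eq_single _ c₁ (fun d hd =>
      by rw [spanMatrix_offdiag H d c₁ hd, zero_mul])]
    rw [spanMatrix_diag H c₁]
    exact bar_idem _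
  · rw [spanMatrix_offdiag H c₁ c₂ h]
    apply finsum_eq_zero_of_forall_eq_zero
    intro d
    by_cases hd : d = c₁
    · subst hd
      rw [spanMatrix_offdiag H d c₂ h, zero_mul]
    · rw [spanMatrix_offdiag H c₁ d (fun hh => hd hh.symm), mul_zero]

end Main

theorem stmt7 {S : Type*} [Groupoid S]
    [Finite S] [∀ a b : S, Finite (a ⟶ b)]
    {G : Type*} [CommGroup G] [Fintype G] (H : GFunctor S G) :
    (∀ c d : Pi0 S, c ≠ d →
        spanMatrix H H (𝟭 S) (𝟭 S) (fun _ => (1 : G)) c d = 0) ∧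
      (∀ c : Pi0 S,
        spanMatrix H H (𝟭 S) (𝟭 S) (fun _ => (1 : G)) c c =
          (Nat.card (Set.range fun f : Aut (Quotient.out c) => H.map f.hom) : ℚ)⁻¹ •
            ∑ᶠ u : Set.range (fun f : Aut (Quotient.out c) => H.map f.hom),
              MonoidAlgebra.of ℚ G (u : G)) ∧
      ∀ c₁ c₂ : Pi0 S,
        ∑ᶠ d : Pi0 S,
            spanMatrix H H (𝟭 S) (𝟭 S) (fun _ => (1 : G)) d c₂ *
              spanMatrix H H (𝟭 S) (𝟭 S) (fun _ => (1 : G)) c₁ d =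
          spanMatrix H H (𝟭 S) (𝟭 S) (fun _ => (1 : G)) c₁ c₂ :=
  stmt7' H

end
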